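/- Let H be a real symmetric d×d matrix and g ∈ ℝ^d a nonzero vector with grade g* with respect to H. Suppose g does not lie in the range of H, and suppose that ⟨z, Hz⟩ > 0 for every nonzero z ∈ K_{g*−1}(H,g). Then ⟨z, Hz⟩ ≥ 0 for every z ∈ K_{g*}(H,g); moreover, if s minimizes ‖Hs' + g‖ over s' ∈ K_{g*−1}(H,g) and r = −g − Hs is the corresponding residual, then r is a zero-curvature direction, i.e., ⟨r, Hr⟩ = 0 and r ≠ 0. -/

import Mathlib

open Matrix

/-- The Krylov subspace of degree `t`: span of `g, Hg, …, H^{t-1} g`. -/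
noncomputable def Krylov {d : ℕ} (H : Matrix (Fin d) (Fin d) ℝ) (g : Fin d → ℝ) (t : ℕ) :
    Submodule ℝ (Fin d → ℝ) :=
  Submodule.span ℝ ((fun i : ℕ => (H ^ i) *ᵥ g) '' Set.Iio t)

/-- The full Krylov space: span of `{H^i g : i ≥ 0}`. -/
noncomputable def KrylovFull {d : ℕ} (H : Matrix (Fin d) (Fin d) ℝ) (g : Fin d → ℝ) :
    Submodule ℝ (Fin d → ℝ) :=
  Submodule.span ℝ (Set.range fun i : ℕ => (H ^ i) *ᵥ g)

/-- `lam` is a `g`-relevant eigenvalue of `H`: `g` is not orthogonal to `ker (H - lam I)`. -/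
def gRelevant {d : ℕ} (H : Matrix (Fin d) (Fin d) ℝ) (g : Fin d → ℝ) (lam : ℝ) : Prop :=
  ∃ v : Fin d → ℝ, H *ᵥ v = lam • v ∧ v ⬝ᵥ g ≠ 0

/-- The Euclidean norm of a vector. -/
noncomputable def vnorm {d : ℕ} (x : Fin d → ℝ) : ℝ := Real.sqrt (x ⬝ᵥ x)

/-- dot product of a vector with itself is nonnegative. -/
lemma dp_self_nonneg {d : ℕ} (x : Fin d → ℝ) : 0 ≤ x ⬝ᵥ x :=
  Finset.sum_nonneg fun i _ => mul_self_nonneg (x i)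

/-- the dot product as a bilinear map. -/
noncomputable def dpBilin (d : ℕ) : (Fin d → ℝ) →ₗ[ℝ] (Fin d → ℝ) →ₗ[ℝ] ℝ :=
  LinearMap.mk₂ ℝ (· ⬝ᵥ ·) (fun x y z => add_dotProduct x y z)
    (fun c x y => smul_dotProduct c x y) (fun x y z => dotProduct_add x y z)
    (fun c x y => dotProduct_smul c x y)

/-- If `g ∉ range H` and the curvature is strictly positive on `K_{g*-1}(H,g)`, then it is
nonnegative on `K_{g*}(H,g)`, and the residual of the MINRES solution over `K_{g*-1}(H,g)`
is a nonzero zero-curvature direction. -/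
theorem krylov_psd_and_zero_curvature_residual {d : ℕ} (H : Matrix (Fin d) (Fin d) ℝ)
    (hH : H.IsSymm) (g : Fin d → ℝ) (hg : g ≠ 0)
    (gstar : ℕ) (hgstar : 0 < gstar)
    (hgrade : ∀ t : ℕ, Module.finrank ℝ (Krylov H g t) = min t gstar)
    (hnr : ¬ ∃ x, H *ᵥ x = g)
    (hpos : ∀ z ∈ Krylov H g (gstar - 1), z ≠ 0 → 0 < z ⬝ᵥ (H *ᵥ z)) :
    (∀ z ∈ Krylov H g gstar, 0 ≤ z ⬝ᵥ (H *ᵥ z)) ∧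
    (∀ s ∈ Krylov H g (gstar - 1),
      (∀ s' ∈ Krylov H g (gstar - 1), vnorm (H *ᵥ s + g) ≤ vnorm (H *ᵥ s' + g)) →
      (-g - H *ᵥ s) ⬝ᵥ (H *ᵥ (-g - H *ᵥ s)) = 0 ∧ -g - H *ᵥ s ≠ 0) := by
  classical
  set f : (Fin d → ℝ) →ₗ[ℝ] (Fin d → ℝ) := H.mulVecLin with hf
  have hfa : ∀ x, f x = H *ᵥ x := fun x => rfl
  -- symmetry of the quadratic form
  have hsymm : ∀ x y : Fin d → ℝ, x ⬝ᵥ (H *ᵥ y) = (H *ᵥ x) ⬝ᵥ y := by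
    intro x y
    rw [dotProduct_mulVec, ← vecMul_transpose, hH.eq]
  set K1 := Krylov H g (gstar - 1) with hK1
  set K := Krylov H g gstar with hK
  -- monotonicity
  have hmono : ∀ {a b : ℕ}, a ≤ b → Krylov H g a ≤ Krylov H g b := by
    intro a b hab
    exact Submodule.span_mono (Set.image_mono fun i hi => lt_of_lt_of_le hi hab)
  have hK1K : K1 ≤ K := hmono (Nat.sub_le _ _)
  -- H maps Krylov t into Krylov (t+1)
  have hKmap : ∀ t : ℕ, (Krylov H g t).map f ≤ Krylov H g (t + 1) := by
    intro t
    rw [Krylov, Submodule.map_span]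
    apply Submodule.span_le.2
    rintro _ ⟨_, ⟨i, hi, rfl⟩, rfl⟩
    apply Submodule.subset_span
    refine ⟨i + 1, by simpa using Nat.succ_lt_succ hi, ?_⟩
    simp only [hfa, mulVec_mulVec, pow_succ']
  -- K is H-invariant
  have hKK : Krylov H g (gstar + 1) = K := by
    refine (Submodule.eq_of_le_of_finrank_le (hmono (Nat.le_succ _)) ?_).symm
    rw [hgrade, hgrade]; omega
  have hKinv : K.map f ≤ K := le_trans (hKmap gstar) (le_of_eq hKK)
  have hgK : g ∈ K := by
    apply Submodule.subset_span
    exact ⟨0, hgstar, by simp⟩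
  -- finrank facts
  have hrK : Module.finrank ℝ K = gstar := by rw [hK, hgrade]; omega
  have hrK1 : Module.finrank ℝ K1 = gstar - 1 := by rw [hK1, hgrade]; omega
  -- W = H(K1)
  set W := K1.map f with hW
  have hWK : W ≤ K := le_trans (Submodule.map_mono hK1K) hKinv
  -- f is injective on K1
  have hker : LinearMap.ker (f.comp K1.subtype) = ⊥ := by
    rw [LinearMap.ker_eq_bot']
    rintro ⟨z, hz⟩ h
    have hz0 : H *ᵥ z = 0 := by simpa [hfa] using h
    ext
    by_contra hne
    have hzne : z ≠ 0 := by
      intro h0; apply hne; simp [h0]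
    have := hpos z hz hzne
    rw [hz0] at this
    simp at this
  have hrW : Module.finrank ℝ W = gstar - 1 := by
    have h1 : LinearMap.range (f.comp K1.subtype) = W := by
      rw [LinearMap.range_comp, Submodule.range_subtype]
    have h2 := LinearMap.finrank_range_of_inj (LinearMap.ker_eq_bot.1 hker)
    rw [h1, hrK1] at h2
    exact h2
  -- K = K1 ⊔ span {u}
  set u := (H ^ (gstar - 1)) *ᵥ g with hu
  have hsplit : K = K1 ⊔ Submodule.span ℝ {u} := by
    rw [hK, hK1, Krylov, Krylov]
    have : Set.Iio gstar = Set.Iio (gstar - 1) ∪ {gstar - 1} := by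
      ext i; simp [Set.mem_Iio]; omega
    rw [this, Set.image_union, Submodule.span_union, Set.image_singleton]
  have huK : u ∈ K := by
    apply Submodule.subset_span
    exact ⟨gstar - 1, Set.mem_Iio.2 (by omega), rfl⟩
  -- f u ∈ W, hence f(K) ≤ W
  have hfuW : f u ∈ W := by
    by_contra hfu
    have hfune : f u ≠ 0 := fun h0 => hfu (h0 ▸ W.zero_mem)
    have hdisj : W ⊓ Submodule.span ℝ {f u} = ⊥ := by
      rw [eq_bot_iff]
      rintro x ⟨hxW, hxs⟩
      obtain ⟨c, rfl⟩ := Submodule.mem_span_singleton.1 hxs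
      rcases eq_or_ne c 0 with rfl | hc
      · simp
      · refine absurd ?_ hfu
        have := W.smul_mem c⁻¹ hxW
        rwa [smul_smul, inv_mul_cancel₀ hc, one_smul] at this
    have hsup_le : W ⊔ Submodule.span ℝ {f u} ≤ K := by
      refine sup_le hWK (Submodule.span_le.2 ?_)
      rintro _ rfl
      exact hKinv ⟨u, huK, rfl⟩
    have hrsup : Module.finrank ℝ (W ⊔ Submodule.span ℝ {f u} : Submodule ℝ (Fin d → ℝ)) = gstar := by
      have := Submodule.finrank_sup_add_finrank_inf_eq W (Submodule.span ℝ {f u})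
      rw [hdisj, hrW, finrank_span_singleton hfune] at this
      simp at this
      omega
    have heq : W ⊔ Submodule.span ℝ {f u} = K :=
      Submodule.eq_of_le_of_finrank_le hsup_le (by rw [hrsup, hrK])
    have hgrange : g ∈ LinearMap.range f := by
      have : W ⊔ Submodule.span ℝ {f u} ≤ LinearMap.range f := by
        refine sup_le (le_trans (Submodule.map_mono le_top) ?_) (Submodule.span_le.2 ?_)
        · rw [Submodule.map_top]
        · rintro _ rfl; exact ⟨u, rfl⟩
      exact this (heq ▸ hgK)
    obtain ⟨x, hx⟩ := hgrange
    exact hnr ⟨x, hx⟩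
  have hfKW : K.map f ≤ W := by
    rw [hsplit, Submodule.map_sup]
    refine sup_le le_rfl ?_
    rw [Submodule.map_span, Set.image_singleton]
    exact Submodule.span_le.2 (by rintro _ rfl; exact hfuW)
  -- construct r0 ∈ K, r0 ≠ 0, orthogonal to W
  have hW_orth : ∃ r0 : Fin d → ℝ, r0 ∈ K ∧ r0 ≠ 0 ∧ ∀ w ∈ W, w ⬝ᵥ r0 = 0 := by
    set ψ : K →ₗ[ℝ] Module.Dual ℝ W := (((dpBilin d).compl₂ W.subtype).comp K.subtype) with hψ
    have hrange : Module.finrank ℝ (LinearMap.range ψ) ≤ gstar - 1 := by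
      calc Module.finrank ℝ (LinearMap.range ψ) ≤ Module.finrank ℝ (Module.Dual ℝ W) :=
            Submodule.finrank_le _
        _ = gstar - 1 := by rw [Subspace.dual_finrank_eq, hrW]
    have hkerψ : LinearMap.ker ψ ≠ ⊥ := by
      intro h
      have := LinearMap.finrank_range_add_finrank_ker ψ
      rw [h, finrank_bot, hrK] at this
      omega
    obtain ⟨⟨r0, hr0K⟩, hr0ker, hr0ne⟩ := Submodule.exists_mem_ne_zero_of_ne_bot hkerψ
    refine ⟨r0, hr0K, ?_, ?_⟩
    · intro h0; exact hr0ne (by ext; simp [h0])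
    · intro w hw
      have h0 : ψ ⟨r0, hr0K⟩ = 0 := hr0ker
      have h1 := congrFun (congrArg DFunLike.coe h0) ⟨w, hw⟩
      rw [dotProduct_comm]
      simpa [hψ, dpBilin] using h1
  obtain ⟨r0, hr0K, hr0ne, hr0orth⟩ := hW_orth
  -- r0 has zero curvature, and generic orthogonality facts
  have horthK : ∀ z ∈ K, r0 ⬝ᵥ (H *ᵥ z) = 0 := by
    intro z hz
    have : H *ᵥ z ∈ W := hfKW ⟨z, hz, rfl⟩
    rw [dotProduct_comm]
    exact hr0orth _ this
  have hr0curv : r0 ⬝ᵥ (H *ᵥ r0) = 0 := horthK r0 hr0K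
  have hr0K1 : r0 ∉ K1 := by
    intro hmem
    have := hpos r0 hmem hr0ne
    rw [hr0curv] at this
    exact lt_irrefl 0 this
  -- K = K1 ⊔ span r0
  have hsplit2 : K1 ⊔ Submodule.span ℝ {r0} = K := by
    refine Submodule.eq_of_le_of_finrank_le
      (sup_le hK1K (Submodule.span_le.2 (by rintro _ rfl; exact hr0K))) ?_
    have hdisj : K1 ⊓ Submodule.span ℝ {r0} = ⊥ := by
      rw [eq_bot_iff]
      rintro x ⟨hxK1, hxs⟩
      obtain ⟨c, rfl⟩ := Submodule.mem_span_singleton.1 hxs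
      rcases eq_or_ne c 0 with rfl | hc
      · simp
      · refine absurd ?_ hr0K1
        have := K1.smul_mem c⁻¹ hxK1
        rwa [smul_smul, inv_mul_cancel₀ hc, one_smul] at this
    have := Submodule.finrank_sup_add_finrank_inf_eq K1 (Submodule.span ℝ {r0})
    rw [hdisj, hrK1, finrank_span_singleton hr0ne] at this
    simp at this
    omega
  -- Part 1: PSD on K
  have part1 : ∀ z ∈ K, 0 ≤ z ⬝ᵥ (H *ᵥ z) := by
    intro z hz
    rw [← hsplit2] at hz
    obtain ⟨y, hy, w, hw, rfl⟩ := Submodule.mem_sup.1 hz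
    obtain ⟨c, rfl⟩ := Submodule.mem_span_singleton.1 hw
    have h1 : r0 ⬝ᵥ (H *ᵥ y) = 0 := horthK y (hK1K hy)
    have h2 : y ⬝ᵥ (H *ᵥ r0) = 0 := by
      rw [hsymm, dotProduct_comm]; exact h1
    have hexp : (y + c • r0) ⬝ᵥ (H *ᵥ (y + c • r0)) = y ⬝ᵥ (H *ᵥ y) := by
      rw [mulVec_add, mulVec_smul]
      simp only [dotProduct_add, add_dotProduct, dotProduct_smul, smul_dotProduct,
        smul_eq_mul]
      rw [h1, h2, hr0curv]; ring
    rw [hexp]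
    rcases eq_or_ne y 0 with rfl | hyne
    · simp
    · exact le_of_lt (hpos y hy hyne)
  refine ⟨part1, ?_⟩
  -- Part 2
  intro s hs hmin
  set v := H *ᵥ s + g with hv
  -- the residual equals -v
  have hres : -g - H *ᵥ s = -v := by rw [hv]; abel
  -- orthogonality of v to W from minimality
  have hov : ∀ w ∈ W, v ⬝ᵥ w = 0 := by
    intro w hw
    obtain ⟨s'', hs'', rfl⟩ := hw
    set c := v ⬝ᵥ f s'' with hc
    set q := (f s'') ⬝ᵥ (f s'') with hq
    have hqnn : 0 ≤ q := dp_self_nonneg _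
    have key : ∀ t : ℝ, 0 ≤ 2 * t * c + t ^ 2 * q := by
      intro t
      have hmem : s + t • s'' ∈ K1 := K1.add_mem hs (K1.smul_mem t hs'')
      have h := hmin _ hmem
      have heq2 : H *ᵥ (s + t • s'') + g = v + t • (f s'') := by
        rw [mulVec_add, mulVec_smul, hv, hfa]; abel
      rw [heq2] at h
      unfold vnorm at h
      have hA : 0 ≤ v ⬝ᵥ v := dp_self_nonneg v
      have hB : 0 ≤ (v + t • f s'') ⬝ᵥ (v + t • f s'') := dp_self_nonneg _
      have hsq : v ⬝ᵥ v ≤ (v + t • f s'') ⬝ᵥ (v + t • f s'') := by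
        have hmul := mul_self_le_mul_self (Real.sqrt_nonneg _) h
        rwa [Real.mul_self_sqrt hA, Real.mul_self_sqrt hB] at hmul
      have hexp : (v + t • f s'') ⬝ᵥ (v + t • f s'') =
          v ⬝ᵥ v + 2 * t * c + t ^ 2 * q := by
        simp only [dotProduct_add, add_dotProduct, dotProduct_smul, smul_dotProduct,
          smul_eq_mul, hc, hq]
        rw [dotProduct_comm (f s'') v]
        ring
      rw [hexp] at hsq
      linarith
    have hc0 : c = 0 := by
      have hq1 : (0:ℝ) < q + 1 := by linarith
      set t0 : ℝ := -c / (q + 1) with ht0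
      have h1 := key t0
      have h3 : 0 ≤ (2 * t0 * c + t0 ^ 2 * q) * (q + 1) ^ 2 :=
        mul_nonneg h1 (sq_nonneg _)
      have h4 : (2 * t0 * c + t0 ^ 2 * q) * (q + 1) ^ 2 = -(c ^ 2 * (q + 2)) := by
        rw [ht0]
        field_simp
        ring
      rw [h4] at h3
      nlinarith [sq_nonneg c]
    simpa [hc] using hc0
  -- residual nonzero
  have hrne : -g - H *ᵥ s ≠ 0 := by
    intro h0
    apply hnr
    refine ⟨-s, ?_⟩
    have hv0 : v = 0 := by
      have h1 := h0
      rw [hres, neg_eq_zero] at h1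
      exact h1
    rw [hv] at hv0
    have hHs : H *ᵥ s = -g := eq_neg_of_add_eq_zero_left hv0
    rw [mulVec_neg, hHs, neg_neg]
  refine ⟨?_, hrne⟩
  -- residual zero curvature
  have hvK : v ∈ K := K.add_mem (hWK ⟨s, hs, rfl⟩) hgK
  have hHvW : H *ᵥ v ∈ W := hfKW ⟨v, hvK, rfl⟩
  rw [hres]
  rw [mulVec_neg, dotProduct_neg, neg_dotProduct, neg_neg]
  exact hov _ hHvW
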